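/- arXiv:2501.15131 — 2 statements merged into one kernel-verified Lean document; each statement's English description precedes it below -/
import Mathlib

section
/- Let A = FᵀF, let x ∈ ℝⁿ with A x ≠ 0, and let v ∈ ℝʳ satisfy vᵀF x = 0 and σ := 1 − vᵀF Fᵀv/(2(xᵀAx)^{1/2}) > 0. With H = 2I − (Fᵀv)(Fᵀv)ᵀ/(xᵀAx)^{1/2} and ∇f(x) = 2x − Ax/(xᵀAx)^{1/2}, the optimal decrease of the quadratic surrogate satisfies ∇f(x)ᵀ H⁻¹ ∇f(x) = (1/2)‖∇f(x)‖² + (vᵀF FᵀF x)² / (4σ (xᵀAx)^{3/2}). Consequently, over vectors v with vᵀF x = 0 and ‖v‖² = 1/ρ, maximizing the surrogate decrease min_d {∇f(x)ᵀd + (1/2)dᵀHd} is equivalent to maximizing the generalized Rayleigh quotient (vᵀB v)/(vᵀC v) with B = q qᵀ, q = F FᵀF x, and C = ρI − F Fᵀ/(2(xᵀAx)^{1/2}). -/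
open Matrix

/-- View a plain vector as an element of Euclidean space. -/
def toEuc {m : ℕ} (w : Fin m → ℝ) : EuclideanSpace ℝ (Fin m) := WithLp.toLp 2 w

lemma vmv_mulVec {m k : ℕ} (w : Fin m → ℝ) (u : Fin k → ℝ) (d : Fin k → ℝ) :
    (vecMulVec w u) *ᵥ d = (u ⬝ᵥ d) • w := by
  ext i
  simp only [mulVec, vecMulVec_apply, dotProduct, Pi.smul_apply, smul_eq_mul, Finset.sum_mul,
    Finset.mul_sum]
  exact Finset.sum_congr rfl (fun t _ => by ring)

lemma vmv_mul_vmv {k : ℕ} (a b c d : Fin k → ℝ) :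
    vecMulVec a b * vecMulVec c d = (b ⬝ᵥ c) • vecMulVec a d := by
  ext i j
  simp only [mul_apply, vecMulVec_apply, Matrix.smul_apply, smul_eq_mul, dotProduct,
    Finset.sum_mul, Finset.mul_sum]
  exact Finset.sum_congr rfl (fun t _ => by ring)

lemma norm_toEuc_sq {m : ℕ} (w : Fin m → ℝ) : ‖toEuc w‖ ^ 2 = w ⬝ᵥ w := by
  rw [toEuc, EuclideanSpace.norm_eq, Real.sq_sqrt (by positivity)]
  simp [dotProduct, sq]

/-- Let `A = FᵀF`, `x` with `A x ≠ 0`, and `v` with `vᵀF x = 0` and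
`σ := 1 − vᵀF Fᵀv/(2(xᵀAx)^{1/2}) > 0`. With `H = 2I − (Fᵀv)(Fᵀv)ᵀ/(xᵀAx)^{1/2}` and
`g = ∇f(x) = 2x − Ax/(xᵀAx)^{1/2}`, the optimal decrease of the quadratic surrogate
satisfies `gᵀ H⁻¹ g = (1/2)‖g‖² + (vᵀF FᵀF x)²/(4σ (xᵀAx)^{3/2})`; moreover
`min_d {gᵀd + (1/2)dᵀHd} = −(1/2) gᵀH⁻¹g`, attained at `d = −H⁻¹g`, and over `v` with
`vᵀF x = 0`, `‖v‖² = 1/ρ`, the decrease equals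
`(1/2)‖g‖² + (1/(4(xᵀAx)^{3/2})) (vᵀBv)/(vᵀCv)` with `B = q qᵀ`, `q = F FᵀF x`,
`C = ρI − F Fᵀ/(2(xᵀAx)^{1/2})`; hence maximizing the surrogate decrease over `Ω` is
equivalent to maximizing the generalized Rayleigh quotient `(vᵀBv)/(vᵀCv)`. -/
theorem stmt_13 {r n : ℕ} (hn : 0 < n)
    (F : Matrix (Fin r) (Fin n) ℝ) (A : Matrix (Fin n) (Fin n) ℝ)
    (hAF : A = Fᵀ * F)
    (x : Fin n → ℝ) (hx : A.mulVec x ≠ 0)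
    (ρ : ℝ) (hρ : 1 ≤ ρ)
    (v : EuclideanSpace ℝ (Fin r))
    (hvFx : v ⬝ᵥ F.mulVec x = 0)
    (σ : ℝ)
    (hσdef : σ = 1 - v ⬝ᵥ (F * Fᵀ).mulVec v / (2 * Real.sqrt (x ⬝ᵥ A.mulVec x)))
    (hσ : 0 < σ)
    (H : Matrix (Fin n) (Fin n) ℝ)
    (hHdef : H = (2 : ℝ) • (1 : Matrix (Fin n) (Fin n) ℝ)
        - (Real.sqrt (x ⬝ᵥ A.mulVec x))⁻¹ • vecMulVec (Fᵀ.mulVec v) (Fᵀ.mulVec v))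
    (g : Fin n → ℝ)
    (hgdef : g = (2 : ℝ) • x - (Real.sqrt (x ⬝ᵥ A.mulVec x))⁻¹ • A.mulVec x)
    (q : Fin r → ℝ) (hqdef : q = F.mulVec (A.mulVec x))
    (B : Matrix (Fin r) (Fin r) ℝ) (hBdef : B = vecMulVec q q)
    (C : Matrix (Fin r) (Fin r) ℝ)
    (hCdef : C = ρ • (1 : Matrix (Fin r) (Fin r) ℝ)
        - (2 * Real.sqrt (x ⬝ᵥ A.mulVec x))⁻¹ • (F * Fᵀ)) :
    g ⬝ᵥ (H⁻¹.mulVec g)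
      = (1 / 2) * ‖toEuc g‖ ^ 2
        + (v ⬝ᵥ q) ^ 2 / (4 * σ * Real.sqrt (x ⬝ᵥ A.mulVec x) ^ 3) ∧
    (∀ d : Fin n → ℝ,
      -((1 / 2) * (g ⬝ᵥ (H⁻¹.mulVec g))) ≤ g ⬝ᵥ d + (1 / 2) * (d ⬝ᵥ H.mulVec d)) ∧
    (g ⬝ᵥ (-(H⁻¹.mulVec g)) + (1 / 2) * ((-(H⁻¹.mulVec g)) ⬝ᵥ H.mulVec (-(H⁻¹.mulVec g)))
      = -((1 / 2) * (g ⬝ᵥ (H⁻¹.mulVec g)))) ∧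
    (‖v‖ ^ 2 = 1 / ρ →
      g ⬝ᵥ (H⁻¹.mulVec g)
        = (1 / 2) * ‖toEuc g‖ ^ 2
          + (1 / (4 * Real.sqrt (x ⬝ᵥ A.mulVec x) ^ 3))
            * ((v ⬝ᵥ B.mulVec v) / (v ⬝ᵥ C.mulVec v))) := by
  -- basic positivity
  have hFx : F *ᵥ x ≠ 0 := by
    intro h0
    apply hx
    rw [hAF, ← mulVec_mulVec, h0, mulVec_zero]
  have hxAx : x ⬝ᵥ A *ᵥ x = (F *ᵥ x) ⬝ᵥ (F *ᵥ x) := by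
    rw [hAF, ← mulVec_mulVec, dotProduct_mulVec, ← mulVec_transpose, transpose_transpose]
  have hxAxpos : 0 < x ⬝ᵥ A *ᵥ x := by
    rw [hxAx]
    rcases Function.ne_iff.mp hFx with ⟨i, hi⟩
    have h1 : 0 < (F *ᵥ x) i ^ 2 :=
      lt_of_le_of_ne (sq_nonneg _) (Ne.symm (pow_ne_zero 2 hi))
    calc 0 < (F *ᵥ x) i ^ 2 := h1
    _ ≤ ∑ j, ((F *ᵥ x) j)^2 := Finset.single_le_sum (f := fun j => ((F *ᵥ x) j)^2)
        (fun j _ => sq_nonneg _) (Finset.mem_univ i)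
    _ = (F *ᵥ x) ⬝ᵥ (F *ᵥ x) := by simp [dotProduct, sq]
  set s : ℝ := Real.sqrt (x ⬝ᵥ A *ᵥ x) with hs
  have hspos : 0 < s := Real.sqrt_pos.mpr hxAxpos
  set u : Fin n → ℝ := Fᵀ *ᵥ v with hu
  have hux : u ⬝ᵥ x = 0 := by
    rw [hu, mulVec_transpose, ← dotProduct_mulVec, hvFx]
  have huu : v ⬝ᵥ (F * Fᵀ) *ᵥ v = u ⬝ᵥ u := by
    rw [← mulVec_mulVec, dotProduct_mulVec, ← mulVec_transpose, hu, dotProduct_comm]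
  have hσ' : u ⬝ᵥ u = 2 * s * (1 - σ) := by
    rw [hσdef, huu]
    field_simp
    ring
  have hHsymm : Hᵀ = H := by
    rw [hHdef]
    simp [transpose_smul, vecMulVec_eq (Fin 1), Matrix.transpose_sub, Matrix.mul_assoc]
  -- the inverse
  set W : Matrix (Fin n) (Fin n) ℝ :=
    (2 : ℝ)⁻¹ • ((1 : Matrix (Fin n) (Fin n) ℝ) + (2 * s * σ)⁻¹ • vecMulVec u u) with hW
  have hcoef : ((2 * s * σ)⁻¹ : ℝ) - s⁻¹ * 2⁻¹ * (1 + (2 * s * σ)⁻¹ * (2 * s * (1 - σ))) = 0 := by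
    field_simp
    ring
  have hHW : H * W = 1 := by
    rw [hHdef, hW]
    simp only [Matrix.sub_mul, Matrix.smul_mul, Matrix.mul_smul, Matrix.one_mul,
      Matrix.mul_add, Matrix.mul_one, vmv_mul_vmv, hσ']
    have step : (2:ℝ)⁻¹ • ((2:ℝ) • (1 : Matrix (Fin n) (Fin n) ℝ) - s⁻¹ • vecMulVec u u
          + (2 * s * σ)⁻¹ • ((2:ℝ) • vecMulVec u u - s⁻¹ • (2 * s * (1 - σ)) • vecMulVec u u))
        = (1 : Matrix (Fin n) (Fin n) ℝ)
          + (((2 * s * σ)⁻¹ : ℝ) - s⁻¹ * 2⁻¹ * (1 + (2 * s * σ)⁻¹ * (2 * s * (1 - σ))))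
            • vecMulVec u u := by
      module
    rw [step, hcoef, zero_smul, add_zero]
  have hinv : H⁻¹ = W := Matrix.inv_eq_right_inv hHW
  have hσne : σ ≠ 0 := ne_of_gt hσ
  have hsne : s ≠ 0 := ne_of_gt hspos
  -- H⁻¹ applied to g
  have hWg : H⁻¹ *ᵥ g = (2:ℝ)⁻¹ • (g + ((2 * s * σ)⁻¹ * (u ⬝ᵥ g)) • u) := by
    rw [hinv, hW, smul_mulVec, add_mulVec, one_mulVec, smul_mulVec,
      vmv_mulVec, smul_smul]
  have hvq : v ⬝ᵥ q = u ⬝ᵥ (A *ᵥ x) := by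
    rw [hqdef, dotProduct_mulVec v F, ← mulVec_transpose]
  have hug : u ⬝ᵥ g = -(s⁻¹ * (v ⬝ᵥ q)) := by
    rw [hgdef, dotProduct_sub, dotProduct_smul, dotProduct_smul, hux, hvq]
    try simp
  have hgWg : g ⬝ᵥ (H⁻¹ *ᵥ g)
      = 2⁻¹ * (g ⬝ᵥ g + (2 * s * σ)⁻¹ * (u ⬝ᵥ g) * (u ⬝ᵥ g)) := by
    rw [hWg, dotProduct_smul, dotProduct_add, dotProduct_smul, smul_eq_mul, smul_eq_mul,
      dotProduct_comm g u]
    try ring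
  -- part 1
  have part1 : g ⬝ᵥ (H⁻¹ *ᵥ g)
      = (1 / 2) * ‖toEuc g‖ ^ 2 + (v ⬝ᵥ q) ^ 2 / (4 * σ * s ^ 3) := by
    rw [hgWg, hug, norm_toEuc_sq]
    field_simp
    ring
  -- H applied to H⁻¹ g
  have hHz : H *ᵥ (H⁻¹ *ᵥ g) = g := by
    rw [mulVec_mulVec, hinv, hHW, one_mulVec]
  set z : Fin n → ℝ := H⁻¹ *ᵥ g with hz
  -- part 3
  have part3 : g ⬝ᵥ (-z) + (1 / 2) * ((-z) ⬝ᵥ H *ᵥ (-z)) = -((1 / 2) * (g ⬝ᵥ z)) := by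
    have h1 : (-z) ⬝ᵥ H *ᵥ (-z) = z ⬝ᵥ (H *ᵥ z) := by
      rw [mulVec_neg, neg_dotProduct, dotProduct_neg, neg_neg]
    rw [h1, hHz, dotProduct_neg, dotProduct_comm z g]
    ring
  -- symmetry of quadratic form
  have hsym : ∀ a b : Fin n → ℝ, a ⬝ᵥ (H *ᵥ b) = b ⬝ᵥ (H *ᵥ a) := by
    intro a b
    rw [dotProduct_mulVec, ← mulVec_transpose, hHsymm, dotProduct_comm]
  -- positive semidefiniteness
  have hpsd : ∀ w : Fin n → ℝ, 0 ≤ w ⬝ᵥ (H *ᵥ w) := by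
    intro w
    have hHw : w ⬝ᵥ (H *ᵥ w) = 2 * (w ⬝ᵥ w) - s⁻¹ * ((u ⬝ᵥ w) * (u ⬝ᵥ w)) := by
      rw [hHdef, sub_mulVec, smul_mulVec, one_mulVec, smul_mulVec, vmv_mulVec,
        dotProduct_sub, dotProduct_smul, dotProduct_smul, dotProduct_smul, smul_eq_mul,
        smul_eq_mul, smul_eq_mul, dotProduct_comm w u]
    have hww : 0 ≤ w ⬝ᵥ w := Finset.sum_nonneg fun i _ => mul_self_nonneg _
    have hCS : (u ⬝ᵥ w) * (u ⬝ᵥ w) ≤ (u ⬝ᵥ u) * (w ⬝ᵥ w) := by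
      have := Finset.sum_mul_sq_le_sq_mul_sq Finset.univ u w
      simpa [dotProduct, sq] using this
    rw [hHw, hσ'] at *
    have h2 : s⁻¹ * ((u ⬝ᵥ w) * (u ⬝ᵥ w)) ≤ s⁻¹ * (2 * s * (1 - σ) * (w ⬝ᵥ w)) := by
      apply mul_le_mul_of_nonneg_left _ (le_of_lt (inv_pos.mpr hspos))
      rw [← hσ']
      exact hCS
    have h3 : s⁻¹ * (2 * s * (1 - σ) * (w ⬝ᵥ w)) = 2 * (1 - σ) * (w ⬝ᵥ w) := by
      field_simp
    nlinarith [mul_nonneg (le_of_lt hσ) hww]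
  -- part 2
  have part2 : ∀ d : Fin n → ℝ,
      -((1 / 2) * (g ⬝ᵥ z)) ≤ g ⬝ᵥ d + (1 / 2) * (d ⬝ᵥ H *ᵥ d) := by
    intro d
    have hexp : (d + z) ⬝ᵥ (H *ᵥ (d + z))
        = d ⬝ᵥ (H *ᵥ d) + 2 * (g ⬝ᵥ d) + g ⬝ᵥ z := by
      rw [add_dotProduct, mulVec_add, dotProduct_add, dotProduct_add]
      have h1 : d ⬝ᵥ (H *ᵥ z) = g ⬝ᵥ d := by rw [hHz, dotProduct_comm]
      have h2 : z ⬝ᵥ (H *ᵥ d) = g ⬝ᵥ d := by rw [hsym z d, hHz, dotProduct_comm]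
      have h3 : z ⬝ᵥ (H *ᵥ z) = g ⬝ᵥ z := by rw [hHz, dotProduct_comm]
      rw [h1, h2, h3]
      ring
    have := hpsd (d + z)
    rw [hexp] at this
    linarith
  -- part 4
  refine ⟨part1, part2, part3, ?_⟩
  intro hv
  have hρpos : (0:ℝ) < ρ := lt_of_lt_of_le zero_lt_one hρ
  have hvv : v ⬝ᵥ v = 1 / ρ := by
    rw [← hv, ← norm_toEuc_sq]
    rfl
  have hBv : v ⬝ᵥ B *ᵥ v = (v ⬝ᵥ q) ^ 2 := by
    rw [hBdef, vmv_mulVec, dotProduct_smul, smul_eq_mul, dotProduct_comm q v]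
    ring
  have hCv : v ⬝ᵥ C *ᵥ v = σ := by
    rw [hCdef, sub_mulVec, smul_mulVec, one_mulVec, smul_mulVec,
      dotProduct_sub, dotProduct_smul, dotProduct_smul, smul_eq_mul, smul_eq_mul,
      huu, hσ', hvv]
    field_simp
    ring
  rw [part1, hBv, hCv]
  have : (v ⬝ᵥ q) ^ 2 / (4 * σ * s ^ 3)
      = 1 / (4 * s ^ 3) * ((v ⬝ᵥ q) ^ 2 / σ) := by
    rw [div_mul_div_comm, one_mul]
    ring
  rw [this]
end

section
/- Let A be an n×n real symmetric matrix with orthonormal eigenvectors u₁,…,uₙ and eigenvalues λ₁ > λ₂ ≥ ⋯ ≥ λₙ ≥ 0. Let (ζ_k) and (ω_k) be real sequences with ζ_k + ω_k λ₁ ≠ 0 for all k, let x₀ ∈ ℝⁿ with ‖x₀‖ = 1 and u₁ᵀx₀ ≠ 0, and define x_{k+1} = ζ_k A x_k + ω_k A² x_k. Define θ_k ∈ [0, π/2] by cos θ_k = |u₁ᵀx_k|/‖x_k‖. Suppose there is δ ∈ [0,1] such that |ζ_k + ω_k λ_j| ≤ δ |ζ_k + ω_k λ₁| for all j = 2,…,n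 and all k. Then for all k ≥ 0, sin θ_k ≤ tan θ₀ · (λ₂/λ₁)^k · δ^k. -/
open Matrix RealInnerProductSpace

set_option maxHeartbeats 1000000 in
/-- Convergence of the (unnormalized) Split-Merge iteration
`x_{k+1} = ζ_k A x_k + ω_k A² x_k`: if `A` is symmetric PSD with orthonormal eigenvectors
`u i` and eigenvalues `λ 0 > λ 1 ≥ ⋯ ≥ λ (n-1) ≥ 0`, `ζ_k + ω_k λ₁ ≠ 0`, `‖x₀‖ = 1`,
`u₁ᵀx₀ ≠ 0`, and `|ζ_k + ω_k λ_j| ≤ δ |ζ_k + ω_k λ₁|` for all `j ≥ 2` and some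
`δ ∈ [0,1]`, then `sin θ_k ≤ tan θ₀ (λ₂/λ₁)^k δ^k`, where
`cos θ_k = |u₁ᵀx_k|/‖x_k‖`. -/
theorem stmt_17 {n : ℕ} (hn : 2 ≤ n)
    (A : Matrix (Fin n) (Fin n) ℝ) (hsymm : A.IsSymm)
    (lam : Fin n → ℝ) (u : Fin n → EuclideanSpace ℝ (Fin n))
    (horth : Orthonormal ℝ u)
    (heig : ∀ i, toEuc (A.mulVec (u i)) = lam i • u i)
    (hanti : ∀ i j : Fin n, i ≤ j → lam j ≤ lam i)
    (hnonneg : ∀ i, 0 ≤ lam i)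
    (hgap : lam ⟨1, by omega⟩ < lam ⟨0, by omega⟩)
    (ζ ω : ℕ → ℝ)
    (hnz : ∀ k, ζ k + ω k * lam ⟨0, by omega⟩ ≠ 0)
    (x : ℕ → EuclideanSpace ℝ (Fin n))
    (hx0norm : ‖x 0‖ = 1)
    (hx0 : ⟪u ⟨0, by omega⟩, x 0⟫ ≠ 0)
    (hrec : ∀ k, x (k + 1)
      = ζ k • toEuc (A.mulVec (x k)) + ω k • toEuc (A.mulVec (A.mulVec (x k))))
    (δ : ℝ) (hδ0 : 0 ≤ δ) (hδ1 : δ ≤ 1)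
    (hbound : ∀ k, ∀ j : Fin n, j ≠ ⟨0, by omega⟩ →
      |ζ k + ω k * lam j| ≤ δ * |ζ k + ω k * lam ⟨0, by omega⟩|) :
    ∀ k, Real.sqrt (1 - (|⟪u ⟨0, by omega⟩, x k⟫| / ‖x k‖) ^ 2)
      ≤ (Real.sqrt (1 - |⟪u ⟨0, by omega⟩, x 0⟫| ^ 2) / |⟪u ⟨0, by omega⟩, x 0⟫|)
        * (lam ⟨1, by omega⟩ / lam ⟨0, by omega⟩) ^ k * δ ^ k := by
  set i0 : Fin n := ⟨0, by omega⟩ with hi0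
  set i1 : Fin n := ⟨1, by omega⟩ with hi1
  have hl1 : 0 ≤ lam i1 := hnonneg i1
  have hl0 : 0 < lam i0 := lt_of_le_of_lt hl1 hgap
  -- Parseval
  haveI : Nonempty (Fin n) := ⟨i0⟩
  let bb := basisOfOrthonormalOfCardEqFinrank horth (by simp)
  have hbb : ⇑bb = u := coe_basisOfOrthonormalOfCardEqFinrank horth _
  let b := bb.toOrthonormalBasis (by rwa [hbb])
  have hbu : ⇑b = u := by rw [Module.Basis.coe_toOrthonormalBasis, hbb]
  have parseval : ∀ y : EuclideanSpace ℝ (Fin n), ‖y‖ ^ 2 = ∑ i, ⟪u i, y⟫ ^ 2 := by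
    intro y
    have h1 : ∀ i, ⟪u i, y⟫ = b.repr y i := by
      intro i; rw [← hbu, b.repr_apply_apply]
    have h2 : ‖y‖ = ‖b.repr y‖ := (b.repr.norm_map y).symm
    rw [h2, EuclideanSpace.norm_eq, Real.sq_sqrt (by positivity)]
    simp [h1, Real.norm_eq_abs, sq_abs]
  -- spectral action on inner products
  have hAinner : ∀ (y : EuclideanSpace ℝ (Fin n)) (i : Fin n),
      ⟪u i, toEuc (A.mulVec y)⟫ = lam i * ⟪u i, y⟫ := by
    intro y i
    have h1 : ⟪u i, toEuc (A.mulVec y)⟫ = (u i : Fin n → ℝ) ⬝ᵥ (A.mulVec y) := by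
      simp [PiLp.inner_apply, toEuc, dotProduct, mul_comm]
    have h2 : (u i : Fin n → ℝ) ⬝ᵥ (A.mulVec y) = (A.mulVec (u i)) ⬝ᵥ (y : Fin n → ℝ) := by
      rw [Matrix.dotProduct_mulVec, ← Matrix.mulVec_transpose, hsymm.eq]
    have h3 : A.mulVec (u i) = fun j => lam i * u i j := by
      funext j; simpa [toEuc] using congrArg (fun v : EuclideanSpace ℝ (Fin n) => WithLp.ofLp v j) (heig i)
    rw [h1, h2, h3]
    simp [dotProduct, PiLp.inner_apply, Finset.mul_sum, mul_assoc, mul_comm, mul_left_comm]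
  -- coordinate recursion
  have hc : ∀ k (i : Fin n),
      ⟪u i, x (k + 1)⟫ = lam i * (ζ k + ω k * lam i) * ⟪u i, x k⟫ := by
    intro k i
    have h4 : ⟪u i, toEuc (A.mulVec (A.mulVec (x k)))⟫
        = lam i * ⟪u i, toEuc (A.mulVec (x k))⟫ := hAinner (toEuc (A.mulVec (x k))) i
    rw [hrec k, inner_add_right, real_inner_smul_right, real_inner_smul_right,
      hAinner, h4, hAinner]
    ring
  -- nonvanishing of top coordinate
  have hc0 : ∀ k, ⟪u i0, x k⟫ ≠ 0 := by
    intro k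
    induction k with
    | zero => exact hx0
    | succ k ih =>
      rw [hc k i0]
      exact mul_ne_zero (mul_ne_zero (ne_of_gt hl0) (hnz k)) ih
  -- key inductive bound
  set q : ℝ := lam i1 / lam i0 * δ with hq
  have hq0 : 0 ≤ q := by positivity
  have hkey : ∀ k, ∀ i : Fin n, i ≠ i0 →
      |⟪u i, x k⟫| * |⟪u i0, x 0⟫| ≤ q ^ k * |⟪u i, x 0⟫| * |⟪u i0, x k⟫| := by
    intro k
    induction k with
    | zero => intro i _; simp [mul_comm]
    | succ k ih =>
      intro i hi
      have hvi : i.val ≠ 0 := fun h => hi (Fin.ext h)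
      have hli : lam i ≤ lam i1 := hanti i1 i (by simp only [Fin.le_def, hi1]; omega)
      have hfac : lam i * |ζ k + ω k * lam i| ≤ q * (lam i0 * |ζ k + ω k * lam i0|) := by
        have h1 : lam i * |ζ k + ω k * lam i| ≤ lam i1 * (δ * |ζ k + ω k * lam i0|) :=
          mul_le_mul hli (hbound k i hi) (abs_nonneg _) hl1
        calc lam i * |ζ k + ω k * lam i| ≤ lam i1 * (δ * |ζ k + ω k * lam i0|) := h1
          _ = q * (lam i0 * |ζ k + ω k * lam i0|) := by
              rw [hq, div_mul_eq_mul_div, div_mul_eq_mul_div, eq_div_iff hl0.ne']; ring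
      have e1 : |⟪u i, x (k+1)⟫| = lam i * |ζ k + ω k * lam i| * |⟪u i, x k⟫| := by
        rw [hc k i, abs_mul, abs_mul, abs_of_nonneg (hnonneg i)]
      have e0 : |⟪u i0, x (k+1)⟫| = lam i0 * |ζ k + ω k * lam i0| * |⟪u i0, x k⟫| := by
        rw [hc k i0, abs_mul, abs_mul, abs_of_nonneg (le_of_lt hl0)]
      rw [e1, e0]
      calc lam i * |ζ k + ω k * lam i| * |⟪u i, x k⟫| * |⟪u i0, x 0⟫|
          = (lam i * |ζ k + ω k * lam i|) * (|⟪u i, x k⟫| * |⟪u i0, x 0⟫|) := by ring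
        _ ≤ (q * (lam i0 * |ζ k + ω k * lam i0|)) * (q ^ k * |⟪u i, x 0⟫| * |⟪u i0, x k⟫|) := by
            refine mul_le_mul hfac (ih i hi) (by positivity) ?_
            positivity
        _ = q ^ (k+1) * |⟪u i, x 0⟫| * (lam i0 * |ζ k + ω k * lam i0| * |⟪u i0, x k⟫|) := by
            ring
  -- final assembly
  intro k
  have hxk0 : ⟪u i0, x k⟫ ≠ 0 := hc0 k
  have hxknz : x k ≠ 0 := by
    intro h; exact hxk0 (by simp [h])
  have hxknorm : 0 < ‖x k‖ := norm_pos_iff.mpr hxknz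
  have hle : |⟪u i0, x k⟫| ≤ ‖x k‖ := by
    have := abs_real_inner_le_norm (u i0) (x k)
    simpa [horth.1 i0] using this
  set T : ℝ := ∑ i ∈ Finset.univ.erase i0, ⟪u i, x k⟫ ^ 2 with hT
  set T0 : ℝ := ∑ i ∈ Finset.univ.erase i0, ⟪u i, x 0⟫ ^ 2 with hT0
  have hTnn : 0 ≤ T := Finset.sum_nonneg fun i _ => sq_nonneg _
  have hT0nn : 0 ≤ T0 := Finset.sum_nonneg fun i _ => sq_nonneg _
  have hsplitk : ‖x k‖ ^ 2 = ⟪u i0, x k⟫ ^ 2 + T := by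
    rw [parseval (x k), hT, ← Finset.add_sum_erase _ _ (Finset.mem_univ i0)]
  have hsplit0 : 1 - |⟪u i0, x 0⟫| ^ 2 = T0 := by
    have h := parseval (x 0)
    rw [hx0norm, one_pow, ← Finset.add_sum_erase _ _ (Finset.mem_univ i0)] at h
    rw [sq_abs, hT0]
    linarith [h]
  -- LHS simplification
  have hLHS : Real.sqrt (1 - (|⟪u i0, x k⟫| / ‖x k‖) ^ 2) = Real.sqrt T / ‖x k‖ := by
    have h1 : 1 - (|⟪u i0, x k⟫| / ‖x k‖) ^ 2 = T / ‖x k‖ ^ 2 := by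
      rw [div_pow, sq_abs, eq_div_iff (by positivity : (‖x k‖ : ℝ) ^ 2 ≠ 0), sub_mul,
        div_mul_cancel₀ _ (by positivity : (‖x k‖ : ℝ) ^ 2 ≠ 0)]
      linarith [hsplitk]
    rw [h1, Real.sqrt_div hTnn, Real.sqrt_sq hxknorm.le]
  rw [hLHS, hsplit0]
  -- step: sqrt T / ‖x k‖ ≤ sqrt T / |c_k0|
  have habs0 : 0 < |⟪u i0, x k⟫| := abs_pos.mpr hxk0
  have habs00 : 0 < |⟪u i0, x 0⟫| := abs_pos.mpr hx0
  have step1 : Real.sqrt T / ‖x k‖ ≤ Real.sqrt T / |⟪u i0, x k⟫| :=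
    div_le_div_of_nonneg_left (Real.sqrt_nonneg _) habs0 hle
  refine le_trans step1 ?_
  -- core: sqrt T * |c00| ≤ sqrt T0 * q^k * |c_k0|
  have core : Real.sqrt T * |⟪u i0, x 0⟫| ≤ Real.sqrt T0 * q ^ k * |⟪u i0, x k⟫| := by
    have h1 : Real.sqrt T * |⟪u i0, x 0⟫| = Real.sqrt (T * ⟪u i0, x 0⟫ ^ 2) := by
      rw [Real.sqrt_mul hTnn, Real.sqrt_sq_eq_abs]
    have h2 : Real.sqrt T0 * q ^ k * |⟪u i0, x k⟫|
        = Real.sqrt (T0 * (q ^ k * |⟪u i0, x k⟫|) ^ 2) := by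
      rw [Real.sqrt_mul hT0nn, Real.sqrt_sq (by positivity), mul_assoc]
    rw [h1, h2]
    apply Real.sqrt_le_sqrt
    rw [hT, hT0, Finset.sum_mul, Finset.sum_mul]
    apply Finset.sum_le_sum
    intro i hi
    have hine := hkey k i (Finset.ne_of_mem_erase hi)
    have hmul := mul_le_mul hine hine (mul_nonneg (abs_nonneg _) (abs_nonneg _))
      (mul_nonneg (mul_nonneg (pow_nonneg hq0 k) (abs_nonneg _)) (abs_nonneg _))
    calc ⟪u i, x k⟫ ^ 2 * ⟪u i0, x 0⟫ ^ 2
        = (|⟪u i, x k⟫| * |⟪u i0, x 0⟫|) * (|⟪u i, x k⟫| * |⟪u i0, x 0⟫|) := by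
          rw [← sq_abs (⟪u i, x k⟫), ← sq_abs (⟪u i0, x 0⟫)]; ring
      _ ≤ (q ^ k * |⟪u i, x 0⟫| * |⟪u i0, x k⟫|) * (q ^ k * |⟪u i, x 0⟫| * |⟪u i0, x k⟫|) := hmul
      _ = ⟪u i, x 0⟫ ^ 2 * (q ^ k * |⟪u i0, x k⟫|) ^ 2 := by
          rw [← sq_abs (⟪u i, x 0⟫)]; ring
  have final : Real.sqrt T / |⟪u i0, x k⟫| ≤ Real.sqrt T0 * q ^ k / |⟪u i0, x 0⟫| := by
    rw [div_le_div_iff₀ habs0 habs00]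
    exact core
  refine le_trans final (le_of_eq ?_)
  rw [hq, mul_pow]
  field_simp
end
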